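/- Let f(x) = x^ρ ℓ(x) p(x) with ℓ slowly varying at infinity, ρ ∈ ℝ, r > 1, p ∈ P_r. Then f is extended regularly varying (i.e. there exist constants c, d with λ^d ≤ liminf_{x→∞} f(λx)/f(x) ≤ limsup_{x→∞} f(λx)/f(x) ≤ λ^c for all λ > 1) if and only if p is Lipschitz on [1, r]. -/

import Mathlib

open Filter Set Real

/-- `p ∈ P_r`: positive, bounded, right-continuous, bounded away from `0` on `[1,r]`,
and logarithmically periodic with period `r`. -/
def MemP (r : ℝ) (p : ℝ → ℝ) : Prop :=
  (∀ x > (0:ℝ), 0 < p x) ∧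
  (∃ M : ℝ, ∀ x > (0:ℝ), p x ≤ M) ∧
  (∀ x > (0:ℝ), ContinuousWithinAt p (Set.Ici x) x) ∧
  (∃ c > (0:ℝ), ∀ x ∈ Set.Icc (1:ℝ) r, c ≤ p x) ∧
  (∀ x > (0:ℝ), p (x * r) = p x)

/-- `ℓ` is slowly varying at infinity (and eventually positive). -/
def SlowlyVarying (l : ℝ → ℝ) : Prop :=
  (∀ᶠ x in Filter.atTop, 0 < l x) ∧
  ∀ lam > (0:ℝ),
    Filter.Tendsto (fun x : ℝ => l (lam * x) / l x) Filter.atTop (nhds 1)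

/-- `f ∈ RL(p, r, ρ)` with slowly varying part `ℓ`:
`f(x rⁿ)/((x rⁿ)^ρ ℓ(x rⁿ)) → p(x)` at every continuity point `x > 0` of `p`. -/
def MemRL (f : ℝ → ℝ) (p : ℝ → ℝ) (r ρ : ℝ) (l : ℝ → ℝ) : Prop :=
  ∀ x > (0:ℝ), ContinuousAt p x →
    Filter.Tendsto (fun n : ℕ => f (x * r^n) / ((x * r^n) ^ ρ * l (x * r^n)))
      Filter.atTop (nhds (p x))

/-- `f` is ultimately monotone: monotone (in either direction) on some `[x₀, ∞)`. -/
def UltimatelyMonotone (f : ℝ → ℝ) : Prop :=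
  ∃ x₀ : ℝ, MonotoneOn f (Set.Ici x₀) ∨ AntitoneOn f (Set.Ici x₀)


-- elementary inequalities
lemma aux_exp_sub_one_le {t : ℝ} (ht : 0 ≤ t) : Real.exp t - 1 ≤ t * Real.exp t := by
  have h := mul_le_mul_of_nonneg_right (Real.add_one_le_exp (-t)) (Real.exp_pos t).le
  rw [Real.exp_neg, inv_mul_cancel₀ (Real.exp_ne_zero t)] at h
  nlinarith

lemma aux_log_ge {t : ℝ} (ht : 0 < t) : 1 - 1/t ≤ Real.log t := by
  have h := Real.log_le_sub_one_of_pos (show 0 < 1/t by positivity)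
  rw [one_div, Real.log_inv] at h
  rw [one_div]
  linarith

lemma aux_ineq1 {a lam r : ℝ} (ha : 0 ≤ a) (hl : 1 ≤ lam) (hlr : lam ≤ r) :
    lam ^ a - 1 ≤ a * r ^ a * (lam - 1) := by
  have hl0 : (0:ℝ) < lam := by linarith
  have hr0 : (0:ℝ) < r := by linarith
  have hlog : 0 ≤ Real.log lam := Real.log_nonneg hl
  have h1 : lam ^ a = Real.exp (a * Real.log lam) := by
    rw [Real.rpow_def_of_pos hl0, mul_comm]
  have h2 : Real.exp (a * Real.log lam) - 1 ≤ (a * Real.log lam) * Real.exp (a * Real.log lam) :=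
    aux_exp_sub_one_le (by positivity)
  have h3 : lam ^ a ≤ r ^ a := Real.rpow_le_rpow hl0.le hlr ha
  have h4 : Real.log lam ≤ lam - 1 := Real.log_le_sub_one_of_pos hl0
  have h5 : (0:ℝ) < r ^ a := Real.rpow_pos_of_pos hr0 a
  have h6 : (0:ℝ) < lam ^ a := Real.rpow_pos_of_pos hl0 a
  have h7 : (a * Real.log lam) * Real.exp (a * Real.log lam) ≤ (a * (lam - 1)) * r ^ a :=
    mul_le_mul (mul_le_mul_of_nonneg_left h4 ha) (h1 ▸ h3) (Real.exp_pos _).le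
      (mul_nonneg ha (by linarith))
  rw [h1]
  nlinarith

lemma aux_ineq2 {b lam : ℝ} (hb : 0 ≤ b) (hl : 1 ≤ lam) : 1 - lam ^ (-b) ≤ b * (lam - 1) := by
  have hl0 : (0:ℝ) < lam := by linarith
  have h1 : lam ^ (-b) = Real.exp (-(b * Real.log lam)) := by
    rw [Real.rpow_def_of_pos hl0]; ring_nf
  have h2 := Real.add_one_le_exp (-(b * Real.log lam))
  have h4 : Real.log lam ≤ lam - 1 := Real.log_le_sub_one_of_pos hl0
  rw [h1]
  nlinarith [mul_le_mul_of_nonneg_left h4 hb]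

lemma aux_ineq3 {K t r : ℝ} (hK : 0 ≤ K) (ht : 1 ≤ t) (htr : t ≤ r) :
    1 + K * (t - 1) ≤ t ^ (K * r) := by
  have ht0 : (0:ℝ) < t := by linarith
  have h1 : t ^ (K * r) = Real.exp ((K * r) * Real.log t) := by
    rw [Real.rpow_def_of_pos ht0, mul_comm]
  have h2 := Real.add_one_le_exp ((K * r) * Real.log t)
  have h3 : 1 - 1/t ≤ Real.log t := aux_log_ge ht0
  have h4 : t * (1 - 1/t) ≤ t * Real.log t := mul_le_mul_of_nonneg_left h3 ht0.le
  have h4' : t * (1 - 1/t) = t - 1 := by field_simp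
  have h5 : t * Real.log t ≤ r * Real.log t :=
    mul_le_mul_of_nonneg_right htr (Real.log_nonneg ht)
  have h6 : t - 1 ≤ r * Real.log t := by linarith
  have h7 : K * (t - 1) ≤ K * (r * Real.log t) := mul_le_mul_of_nonneg_left h6 hK
  rw [h1]
  nlinarith

lemma per_zpow {r : ℝ} {p : ℝ → ℝ} (hr : 1 < r) (hper : ∀ x > (0:ℝ), p (x * r) = p x) :
    ∀ x > (0:ℝ), ∀ n : ℤ, p (x * r ^ n) = p x := by
  have hr0 : (0:ℝ) < r := by linarith
  intro x hx n
  induction n using Int.induction_on with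
  | zero => simp
  | succ n ih =>
      have hx' : 0 < x * r ^ (n:ℤ) := by positivity
      have : x * r ^ ((n:ℤ)+1) = (x * r ^ (n:ℤ)) * r := by
        rw [zpow_add_one₀ hr0.ne']; ring
      rw [this, hper _ hx', ih]
  | pred n ih =>
      have hx' : 0 < x * r ^ (-(n:ℤ)-1) := by positivity
      have h2 : x * r ^ (-(n:ℤ)) = (x * r ^ (-(n:ℤ)-1)) * r := by
        rw [show -(n:ℤ) = (-(n:ℤ)-1) + 1 by ring, zpow_add_one₀ hr0.ne']; ring
      have := hper _ hx'
      rw [← h2] at this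
      rw [← this, ih]

lemma reduce_to_Ico {r : ℝ} (hr : 1 < r) {x : ℝ} (hx : 0 < x) :
    ∃ s ∈ Set.Ico (1:ℝ) r, ∃ n : ℤ, x = s * r ^ n := by
  have hr0 : (0:ℝ) < r := by linarith
  obtain ⟨n, h1, h2⟩ := exists_mem_Ico_zpow hx hr
  have hrn : (0:ℝ) < r ^ n := zpow_pos hr0 n
  refine ⟨x / r ^ n, ⟨(one_le_div hrn).2 h1, ?_⟩, n, by field_simp⟩
  rw [div_lt_iff₀ hrn]
  calc x < r ^ (n+1) := h2
  _ = r * r ^ n := by rw [zpow_add_one₀ hr0.ne']; ring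


lemma ratio_eventually {f p l : ℝ → ℝ} {ρ : ℝ} (hl : SlowlyVarying l)
    (hppos : ∀ x > (0:ℝ), 0 < p x)
    (hf : ∀ x > (0:ℝ), f x = x ^ ρ * l x * p x) {lam : ℝ} (hlam : 0 < lam) :
    ∀ᶠ x in atTop, 0 < x ∧ 0 < l x ∧ 0 < l (lam * x) ∧
      f (lam * x) / f x = lam ^ ρ * (l (lam * x) / l x) * (p (lam * x) / p x) := by
  have hmul : Tendsto (fun x : ℝ => lam * x) atTop atTop :=
    Tendsto.const_mul_atTop hlam tendsto_id
  filter_upwards [eventually_gt_atTop 0, hl.1, hmul.eventually hl.1] with x hx hlx hllx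
  refine ⟨hx, hlx, hllx, ?_⟩
  have hlx0 : 0 < lam * x := by positivity
  rw [hf _ hlx0, hf _ hx, Real.mul_rpow hlam.le hx.le]
  have h1 : x ^ ρ ≠ 0 := (Real.rpow_pos_of_pos hx ρ).ne'
  have h2 : p x ≠ 0 := (hppos x hx).ne'
  field_simp
lemma forward_key {f p l : ℝ → ℝ} {r ρ : ℝ} (hr : 1 < r) (hl : SlowlyVarying l)
    (hppos : ∀ x > (0:ℝ), 0 < p x) {M : ℝ} (hM : ∀ x > (0:ℝ), p x ≤ M)
    {c₀ : ℝ} (hc₀ : 0 < c₀) (hlow : ∀ x > (0:ℝ), c₀ ≤ p x)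
    (hper : ∀ x > (0:ℝ), p (x * r) = p x)
    (hf : ∀ x > (0:ℝ), f x = x ^ ρ * l x * p x)
    {c d lam : ℝ} (hlam : 1 < lam)
    (hd : lam ^ d ≤ Filter.liminf (fun x : ℝ => f (lam * x) / f x) Filter.atTop)
    (hc : Filter.limsup (fun x : ℝ => f (lam * x) / f x) Filter.atTop ≤ lam ^ c)
    {x : ℝ} (hx : 0 < x) :
    lam ^ d ≤ lam ^ ρ * (p (lam * x) / p x) ∧
      lam ^ ρ * (p (lam * x) / p x) ≤ lam ^ c := by
  have hlam0 : (0:ℝ) < lam := by linarith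
  have hr0 : (0:ℝ) < r := by linarith
  have hM0 : (0:ℝ) < M := lt_of_lt_of_le (hppos 1 one_pos) (hM 1 one_pos)
  have hpz := per_zpow hr hper
  set u : ℝ → ℝ := fun y => f (lam * y) / f y with hu
  set a : ℝ := lam ^ ρ * (p (lam * x) / p x) with ha
  have hev := ratio_eventually hl hppos hf hlam0
  -- boundedness of u
  have hev2 : ∀ᶠ y in atTop, 0 ≤ u y ∧ u y ≤ lam ^ ρ * 2 * (M / c₀) := by
    filter_upwards [hev, (hl.2 lam hlam0).eventually (gt_mem_nhds one_lt_two)]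
      with y hy hlr2
    obtain ⟨hy0, hly, hlly, hid⟩ := hy
    have hrp : (0:ℝ) < lam ^ ρ := Real.rpow_pos_of_pos hlam0 ρ
    have hpy := hppos y hy0
    have hply := hppos (lam * y) (by positivity)
    have hpr1 : p (lam * y) / p y ≤ M / c₀ :=
      div_le_div₀ hM0.le (hM _ (by positivity)) hc₀ (hlow y hy0)
    have hpr0 : 0 < p (lam * y) / p y := by positivity
    have hlr0 : 0 < l (lam * y) / l y := by positivity
    constructor
    · show 0 ≤ f (lam * y) / f y
      rw [hid]; positivity
    · show f (lam * y) / f y ≤ lam ^ ρ * 2 * (M / c₀)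
      rw [hid]
      have h1 : l (lam * y) / l y * (p (lam * y) / p y) ≤ 2 * (M / c₀) :=
        mul_le_mul hlr2.le hpr1 hpr0.le (by norm_num)
      calc lam ^ ρ * (l (lam * y) / l y) * (p (lam * y) / p y)
          = lam ^ ρ * (l (lam * y) / l y * (p (lam * y) / p y)) := by ring
        _ ≤ lam ^ ρ * (2 * (M / c₀)) := mul_le_mul_of_nonneg_left h1 hrp.le
        _ = lam ^ ρ * 2 * (M / c₀) := by ring
  have hbdd_le : IsBoundedUnder (· ≤ ·) atTop u :=
    ⟨lam ^ ρ * 2 * (M / c₀), eventually_map.2 (hev2.mono fun y hy => hy.2)⟩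
  have hbdd_ge : IsBoundedUnder (· ≥ ·) atTop u :=
    ⟨0, eventually_map.2 (hev2.mono fun y hy => hy.1)⟩
  -- subsequence y_n = x * r^n
  have hurn : Tendsto (fun n : ℕ => x * r ^ n) atTop atTop :=
    Tendsto.const_mul_atTop hx (tendsto_pow_atTop_atTop_of_one_lt hr)
  have hsub : Tendsto (fun n : ℕ => u (x * r ^ n)) atTop (nhds a) := by
    have h1 : Tendsto
        (fun n : ℕ => lam ^ ρ * (l (lam * (x * r ^ n)) / l (x * r ^ n)) * (p (lam * x) / p x))
        atTop (nhds (lam ^ ρ * 1 * (p (lam * x) / p x))) :=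
      (((hl.2 lam hlam0).comp hurn).const_mul _).mul_const _
    rw [mul_one] at h1
    refine Tendsto.congr' ?_ h1
    filter_upwards [hurn.eventually hev] with n hn
    obtain ⟨hy0, hly, hlly, hid⟩ := hn
    have e1 : p (lam * (x * r ^ n)) = p (lam * x) := by
      rw [show lam * (x * r ^ n) = (lam * x) * r ^ (n:ℤ) by push_cast [zpow_natCast]; ring]
      exact hpz _ (by positivity) _
    have e2 : p (x * r ^ n) = p x := by
      rw [show x * (r:ℝ) ^ n = x * r ^ (n:ℤ) by rw [zpow_natCast]]
      exact hpz _ hx _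
    show lam ^ ρ * (l (lam * (x * r ^ n)) / l (x * r ^ n)) * (p (lam * x) / p x)
        = f (lam * (x * r ^ n)) / f (x * r ^ n)
    rw [hid, e1, e2]
  constructor
  · -- lam^d ≤ a
    by_contra hcon
    push_neg at hcon
    set ε := lam ^ d - a with hε
    have hε0 : 0 < ε := by simp [hε]; linarith
    have hfreq : ∃ᶠ y in atTop, u y ≤ a + ε / 2 := by
      apply hurn.frequently
      apply Filter.Eventually.frequently
      exact hsub.eventually (eventually_le_nhds (by linarith : a < a + ε / 2))
    have := liminf_le_of_frequently_le hfreq hbdd_ge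
    have : lam ^ d ≤ a + ε / 2 := le_trans hd this
    simp [hε] at this
    linarith
  · -- a ≤ lam^c
    by_contra hcon
    push_neg at hcon
    set ε := a - lam ^ c with hε
    have hε0 : 0 < ε := by simp [hε]; linarith
    have hfreq : ∃ᶠ y in atTop, a - ε / 2 ≤ u y := by
      apply hurn.frequently
      apply Filter.Eventually.frequently
      exact hsub.eventually (eventually_ge_nhds (by linarith : a - ε / 2 < a))
    have := le_limsup_of_frequently_le hfreq hbdd_le
    have : a - ε / 2 ≤ lam ^ c := le_trans this hc
    simp [hε] at this
    linarith
lemma forward_lip {p : ℝ → ℝ} {r ρ c d M : ℝ} (hr : 1 < r) (hM0 : 0 < M)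
    (hppos : ∀ x > (0:ℝ), 0 < p x) (hM : ∀ x > (0:ℝ), p x ≤ M)
    (key : ∀ lam > (1:ℝ), ∀ x > (0:ℝ),
      lam ^ d ≤ lam ^ ρ * (p (lam * x) / p x) ∧ lam ^ ρ * (p (lam * x) / p x) ≤ lam ^ c) :
    ∃ L : NNReal, LipschitzOnWith L p (Set.Icc 1 r) := by
  have hr0 : (0:ℝ) < r := by linarith
  set A : ℝ := max (c - ρ) 0 with hA
  set B : ℝ := max (ρ - d) 0 with hB
  have hA0 : 0 ≤ A := le_max_right _ _
  have hB0 : 0 ≤ B := le_max_right _ _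
  have hrA0 : (0:ℝ) < r ^ A := Real.rpow_pos_of_pos hr0 A
  set L : ℝ := M * (A * r ^ A) + M * B with hL
  clear_value A B L
  have claim : ∀ u ∈ Set.Icc (1:ℝ) r, ∀ v ∈ Set.Icc (1:ℝ) r, u ≤ v →
      |p v - p u| ≤ L * (v - u) := by
    intro u hu v hv huv
    rcases eq_or_lt_of_le huv with h | h
    · simp [h]
    have hu0 : (0:ℝ) < u := lt_of_lt_of_le one_pos hu.1
    set lam : ℝ := v / u with hlamdef
    clear_value lam
    have hlam : 1 < lam := by rw [hlamdef]; exact (one_lt_div hu0).2 h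
    have hlam0 : (0:ℝ) < lam := by linarith
    have hlamr : lam ≤ r := by
      rw [hlamdef]
      exact (div_le_iff₀ hu0).2 (le_trans hv.2 (le_mul_of_one_le_right hr0.le hu.1))
    have hveq : lam * u = v := by rw [hlamdef]; field_simp
    obtain ⟨h1, h2⟩ := key lam hlam u hu0
    rw [hveq] at h1 h2
    have hrp : (0:ℝ) < lam ^ ρ := Real.rpow_pos_of_pos hlam0 ρ
    have hpu0 := hppos u hu0
    have hpuM := hM u hu0
    have hbc : p v ≤ lam ^ (c - ρ) * p u := by
      have e : lam ^ c = lam ^ ρ * lam ^ (c - ρ) := by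
        rw [← Real.rpow_add hlam0]; ring_nf
      rw [e] at h2
      have h2' : p v / p u ≤ lam ^ (c - ρ) := le_of_mul_le_mul_left (by linarith) hrp
      exact (div_le_iff₀ hpu0).1 h2'
    have hbd : lam ^ (d - ρ) * p u ≤ p v := by
      have e : lam ^ d = lam ^ ρ * lam ^ (d - ρ) := by
        rw [← Real.rpow_add hlam0]; ring_nf
      rw [e] at h1
      have h1' : lam ^ (d - ρ) ≤ p v / p u := le_of_mul_le_mul_left (by linarith) hrp
      exact (le_div_iff₀ hpu0).1 h1'
    have hcA : lam ^ (c - ρ) ≤ lam ^ A :=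
      Real.rpow_le_rpow_of_exponent_le hlam.le (by rw [hA]; exact le_max_left _ _)
    have hdB : lam ^ (-B) ≤ lam ^ (d - ρ) :=
      Real.rpow_le_rpow_of_exponent_le hlam.le (by
        have h' := le_max_left (ρ - d) (0:ℝ); rw [hB]; linarith)
    have e1 : lam ^ A - 1 ≤ A * r ^ A * (lam - 1) := aux_ineq1 hA0 hlam.le hlamr
    have e2 : 1 - lam ^ (-B) ≤ B * (lam - 1) := aux_ineq2 hB0 hlam.le
    have honeA : 1 ≤ lam ^ A := by
      rw [show (1:ℝ) = lam ^ (0:ℝ) by simp]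
      exact Real.rpow_le_rpow_of_exponent_le hlam.le hA0
    have hlamB1 : lam ^ (-B) ≤ 1 :=
      Real.rpow_le_one_of_one_le_of_nonpos hlam.le (neg_nonpos.2 hB0)
    have hlamsub : lam - 1 ≤ v - u := by
      have e : lam - 1 = (v - u) / u := by rw [hlamdef]; field_simp
      rw [e]; exact div_le_self (by linarith) hu.1
    have hvu : (0:ℝ) ≤ v - u := by linarith
    have upper : p v - p u ≤ L * (v - u) := by
      have s1 : p v - p u ≤ (lam ^ A - 1) * p u := by
        linarith [mul_le_mul_of_nonneg_right hcA hpu0.le]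
      have s2 : (lam ^ A - 1) * p u ≤ (A * r ^ A * (lam - 1)) * M := by
        linarith [mul_le_mul_of_nonneg_left hpuM (by linarith : (0:ℝ) ≤ lam ^ A - 1),
          mul_le_mul_of_nonneg_right e1 hM0.le]
      have s3 : (A * r ^ A * (lam - 1)) * M ≤ (M * (A * r ^ A)) * (v - u) := by
        linarith [mul_le_mul_of_nonneg_left hlamsub
          (mul_nonneg hM0.le (mul_nonneg hA0 hrA0.le))]
      have s4 : (0:ℝ) ≤ M * B * (v - u) := mul_nonneg (mul_nonneg hM0.le hB0) hvu
      rw [hL]; linarith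
    have lower : p u - p v ≤ L * (v - u) := by
      have s1 : p u - p v ≤ (1 - lam ^ (-B)) * p u := by
        linarith [mul_le_mul_of_nonneg_right hdB hpu0.le]
      have s2 : (1 - lam ^ (-B)) * p u ≤ (B * (lam - 1)) * M := by
        linarith [mul_le_mul_of_nonneg_left hpuM (by linarith : (0:ℝ) ≤ 1 - lam ^ (-B)),
          mul_le_mul_of_nonneg_right e2 hM0.le]
      have s3 : (B * (lam - 1)) * M ≤ (M * B) * (v - u) := by
        linarith [mul_le_mul_of_nonneg_left hlamsub (mul_nonneg hM0.le hB0)]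
      have s4 : (0:ℝ) ≤ M * (A * r ^ A) * (v - u) :=
        mul_nonneg (mul_nonneg hM0.le (mul_nonneg hA0 hrA0.le)) hvu
      rw [hL]; linarith
    exact abs_sub_le_iff.2 ⟨by linarith, by linarith⟩
  refine ⟨Real.toNNReal L, LipschitzOnWith.of_dist_le' ?_⟩
  intro x hx y hy
  rw [Real.dist_eq, Real.dist_eq]
  rcases le_total x y with hxy | hxy
  · rw [abs_sub_comm, abs_of_nonpos (by linarith : x - y ≤ 0)]
    have := claim x hx y hy hxy
    linarith
  · rw [abs_of_nonneg (by linarith : 0 ≤ x - y)]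
    have := claim y hy x hx hxy
    linarith
lemma reverse_step {p : ℝ → ℝ} {r : ℝ} (hr : 1 < r)
    (hper : ∀ x > (0:ℝ), p (x * r) = p x)
    {L : ℝ} (hL0 : 0 ≤ L)
    (hD : ∀ a ∈ Set.Icc (1:ℝ) r, ∀ b ∈ Set.Icc (1:ℝ) r, |p a - p b| ≤ L * |a - b|) :
    ∀ t, 1 ≤ t → t ≤ r → ∀ v > (0:ℝ), |p (t * v) - p v| ≤ L * r * (t - 1) := by
  intro t ht htr v hv
  have hr0 : (0:ℝ) < r := by linarith
  have hpz := per_zpow hr hper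
  obtain ⟨s, ⟨hs1, hs2⟩, n, rfl⟩ := reduce_to_Ico hr hv
  have hs0 : (0:ℝ) < s := by linarith
  have ht0 : (0:ℝ) < t := by linarith
  have e1 : p (s * r ^ n) = p s := hpz s hs0 n
  have e2 : p (t * (s * r ^ n)) = p (t * s) := by
    rw [show t * (s * r ^ n) = (t * s) * r ^ n by ring]
    exact hpz _ (by positivity) n
  rw [e1, e2]
  by_cases hcase : t * s ≤ r
  · have hts1 : 1 ≤ t * s := by nlinarith
    have hd := hD (t * s) ⟨hts1, hcase⟩ s ⟨hs1, hs2.le⟩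
    have habs : |t * s - s| = s * (t - 1) := by
      rw [abs_of_nonneg (by nlinarith)]; ring
    rw [habs] at hd
    have h2 : s * (t - 1) ≤ r * (t - 1) :=
      mul_le_mul_of_nonneg_right hs2.le (by linarith)
    have h3 : L * (s * (t - 1)) ≤ L * (r * (t - 1)) := mul_le_mul_of_nonneg_left h2 hL0
    calc |p (t * s) - p s| ≤ L * (s * (t - 1)) := hd
      _ ≤ L * (r * (t - 1)) := h3
      _ = L * r * (t - 1) := by ring
  · push_neg at hcase
    have hts2 : t * s < r * r := by nlinarith
    have e3 : p (t * s) = p (t * s / r) := by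
      have h' := hper (t * s / r) (by positivity)
      rw [div_mul_cancel₀ _ hr0.ne'] at h'
      exact h'
    have e4 : p r = p 1 := by have h' := hper 1 one_pos; rwa [one_mul] at h'
    have hone : (1:ℝ) ≤ t * s / r := (one_le_div hr0).2 hcase.le
    have hmem : t * s / r ∈ Set.Icc (1:ℝ) r :=
      ⟨hone, (div_le_iff₀ hr0).2 hts2.le⟩
    have d1 := hD (t * s / r) hmem 1 ⟨le_refl 1, hr.le⟩
    have d2 := hD r ⟨hr.le, le_refl r⟩ s ⟨hs1, hs2.le⟩
    rw [e3]
    have a1 : |t * s / r - 1| = t * s / r - 1 := abs_of_nonneg (by linarith)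
    have a2 : |r - s| = r - s := abs_of_nonneg (by linarith)
    rw [a1] at d1; rw [a2] at d2
    have key3 : t * s / r - 1 ≤ t * s - r := by
      have e : t * s / r - 1 = (t * s - r) / r := by field_simp
      rw [e]; exact div_le_self (by linarith) hr.le
    have h2 : s * (t - 1) ≤ r * (t - 1) :=
      mul_le_mul_of_nonneg_right hs2.le (by linarith)
    calc |p (t * s / r) - p s| ≤ |p (t * s / r) - p 1| + |p 1 - p s| := abs_sub_le _ _ _
      _ = |p (t * s / r) - p 1| + |p r - p s| := by rw [e4]
      _ ≤ L * (t * s / r - 1) + L * (r - s) := add_le_add d1 d2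
      _ ≤ L * r * (t - 1) := by
          linarith [mul_le_mul_of_nonneg_left key3 hL0, mul_le_mul_of_nonneg_left h2 hL0]
lemma reverse_prb {p : ℝ → ℝ} {r : ℝ} (hr : 1 < r)
    (hppos : ∀ x > (0:ℝ), 0 < p x)
    {c₀ : ℝ} (hc₀ : 0 < c₀) (hlow : ∀ x > (0:ℝ), c₀ ≤ p x)
    (hper : ∀ x > (0:ℝ), p (x * r) = p x)
    {L : ℝ} (hL0 : 0 ≤ L)
    (hstep : ∀ t, 1 ≤ t → t ≤ r → ∀ v > (0:ℝ), |p (t * v) - p v| ≤ L * r * (t - 1)) :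
    ∀ lam > (1:ℝ), ∀ x > (0:ℝ),
      lam ^ (-(L * r / c₀ * r)) ≤ p (lam * x) / p x ∧
      p (lam * x) / p x ≤ lam ^ (L * r / c₀ * r) := by
  have hr0 : (0:ℝ) < r := by linarith
  set K := L * r / c₀ with hK
  have hK0 : 0 ≤ K := div_nonneg (mul_nonneg hL0 hr0.le) hc₀.le
  intro lam hlam x hx
  have hlam0 : (0:ℝ) < lam := by linarith
  have hpz := per_zpow hr hper
  obtain ⟨t, ⟨ht1, ht2⟩, m, hlameq⟩ := reduce_to_Ico hr hlam0
  have ht0 : (0:ℝ) < t := by linarith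
  have hrm0 : (0:ℝ) < (r:ℝ) ^ m := zpow_pos hr0 m
  have hm : 0 ≤ m := by
    by_contra hcon
    push_neg at hcon
    have h1 : (r:ℝ) ^ m ≤ r ^ (-1 : ℤ) := zpow_le_zpow_right₀ hr.le (by omega)
    have h2 : (r:ℝ) ^ (-1 : ℤ) = r⁻¹ := zpow_neg_one r
    have h3 : lam < r * r ^ m := by
      rw [hlameq]; exact mul_lt_mul_of_pos_right ht2 hrm0
    have h4 : r * (r:ℝ) ^ m ≤ r * r⁻¹ := by
      rw [← h2]; exact mul_le_mul_of_nonneg_left h1 hr0.le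
    rw [mul_inv_cancel₀ hr0.ne'] at h4
    linarith
  have hrm1 : (1:ℝ) ≤ r ^ m := one_le_zpow₀ hr.le hm
  have htlam : t ≤ lam := by
    rw [hlameq]; nlinarith
  have e5 : p (lam * x) = p (t * x) := by
    rw [hlameq, show t * r ^ m * x = (t * x) * r ^ m by ring]
    exact hpz _ (by positivity) m
  rw [e5]
  have hab := hstep t ht1 ht2.le x hx
  have hpx := hppos x hx
  have hptx := hppos (t * x) (by positivity)
  have hlx := hlow x hx
  have hltx := hlow (t * x) (by positivity)
  have h3 : 1 + K * (t - 1) ≤ t ^ (K * r) := aux_ineq3 hK0 ht1 ht2.le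
  have htC : t ^ (K * r) ≤ lam ^ (K * r) :=
    Real.rpow_le_rpow ht0.le htlam (by positivity)
  have habs := abs_le.1 hab
  constructor
  · have h8 : L * r * (t - 1) ≤ K * (t - 1) * p (t * x) := by
      have h9 : K * c₀ ≤ K * p (t * x) := mul_le_mul_of_nonneg_left hltx hK0
      have h10 : K * c₀ = L * r := div_mul_cancel₀ _ hc₀.ne'
      nlinarith [mul_le_mul_of_nonneg_right h9 (by linarith : (0:ℝ) ≤ t - 1)]
    have h6 : p x ≤ lam ^ (K * r) * p (t * x) := by
      calc p x ≤ p (t * x) + K * (t - 1) * p (t * x) := by linarith [habs.1]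
        _ = (1 + K * (t - 1)) * p (t * x) := by ring
        _ ≤ t ^ (K * r) * p (t * x) := mul_le_mul_of_nonneg_right h3 hptx.le
        _ ≤ lam ^ (K * r) * p (t * x) := mul_le_mul_of_nonneg_right htC hptx.le
    have hlC : (0:ℝ) < lam ^ (K * r) := Real.rpow_pos_of_pos hlam0 _
    rw [Real.rpow_neg hlam0.le, le_div_iff₀ hpx]
    exact (inv_mul_le_iff₀ hlC).2 h6
  · rw [div_le_iff₀ hpx]
    have h8 : L * r * (t - 1) ≤ K * (t - 1) * p x := by
      have h9 : K * c₀ ≤ K * p x := mul_le_mul_of_nonneg_left hlx hK0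
      have h10 : K * c₀ = L * r := div_mul_cancel₀ _ hc₀.ne'
      nlinarith [mul_le_mul_of_nonneg_right h9 (by linarith : (0:ℝ) ≤ t - 1)]
    calc p (t * x) ≤ p x + K * (t - 1) * p x := by linarith [habs.2]
      _ = (1 + K * (t - 1)) * p x := by ring
      _ ≤ t ^ (K * r) * p x := mul_le_mul_of_nonneg_right h3 hpx.le
      _ ≤ lam ^ (K * r) * p x := mul_le_mul_of_nonneg_right htC hpx.le
lemma reverse_main {f p l : ℝ → ℝ} {ρ : ℝ} (hl : SlowlyVarying l)
    (hppos : ∀ x > (0:ℝ), 0 < p x)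
    (hf : ∀ x > (0:ℝ), f x = x ^ ρ * l x * p x)
    {C : ℝ} (hC0 : 0 ≤ C)
    (hprb : ∀ lam > (1:ℝ), ∀ x > (0:ℝ),
      lam ^ (-C) ≤ p (lam * x) / p x ∧ p (lam * x) / p x ≤ lam ^ C) :
    ∀ lam > (1:ℝ),
      lam ^ (-(|ρ| + C + 1)) ≤ Filter.liminf (fun x : ℝ => f (lam * x) / f x) Filter.atTop ∧
      Filter.limsup (fun x : ℝ => f (lam * x) / f x) Filter.atTop ≤ lam ^ (|ρ| + C + 1) := by
  intro lam hlam
  have hlam0 : (0:ℝ) < lam := by linarith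
  have hev := ratio_eventually hl hppos hf hlam0
  have hlrt := hl.2 lam hlam0
  have hg1 : Tendsto (fun x => lam ^ ρ * (l (lam * x) / l x) * lam ^ C) atTop
      (nhds (lam ^ ρ * 1 * lam ^ C)) := (hlrt.const_mul _).mul_const _
  have hg2 : Tendsto (fun x => lam ^ ρ * (l (lam * x) / l x) * lam ^ (-C)) atTop
      (nhds (lam ^ ρ * 1 * lam ^ (-C))) := (hlrt.const_mul _).mul_const _
  have hup : lam ^ ρ * 1 * lam ^ C < lam ^ (|ρ| + C + 1) := by
    rw [mul_one, ← Real.rpow_add hlam0]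
    exact Real.rpow_lt_rpow_of_exponent_lt hlam (by linarith [le_abs_self ρ])
  have hlo : lam ^ (-(|ρ| + C + 1)) < lam ^ ρ * 1 * lam ^ (-C) := by
    rw [mul_one, ← Real.rpow_add hlam0]
    exact Real.rpow_lt_rpow_of_exponent_lt hlam (by linarith [neg_abs_le ρ])
  have hevup : ∀ᶠ x in atTop,
      f (lam * x) / f x ≤ lam ^ ρ * (l (lam * x) / l x) * lam ^ C ∧
      lam ^ ρ * (l (lam * x) / l x) * lam ^ (-C) ≤ f (lam * x) / f x ∧
      0 ≤ f (lam * x) / f x := by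
    filter_upwards [hev] with x hx
    obtain ⟨hx0, hlx, hllx, hid⟩ := hx
    have hprx := hprb lam hlam x hx0
    have h1 : (0:ℝ) < lam ^ ρ := Real.rpow_pos_of_pos hlam0 ρ
    have hnn : (0:ℝ) ≤ lam ^ ρ * (l (lam * x) / l x) := by positivity
    have hplx := hppos (lam * x) (by positivity)
    have hpx := hppos x hx0
    refine ⟨?_, ?_, ?_⟩
    · rw [hid]; exact mul_le_mul_of_nonneg_left hprx.2 hnn
    · rw [hid]; exact mul_le_mul_of_nonneg_left hprx.1 hnn
    · rw [hid]; positivity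
  have hevc : ∀ᶠ x in atTop, f (lam * x) / f x ≤ lam ^ (|ρ| + C + 1) := by
    filter_upwards [hevup, hg1.eventually (eventually_lt_nhds hup)] with x h1 h2
    linarith [h1.1]
  have hevd : ∀ᶠ x in atTop, lam ^ (-(|ρ| + C + 1)) ≤ f (lam * x) / f x := by
    filter_upwards [hevup, hg2.eventually (eventually_gt_nhds hlo)] with x h1 h2
    linarith [h1.2.1]
  constructor
  · exact le_liminf_of_le (isCoboundedUnder_ge_of_eventually_le atTop hevc) hevd
  · exact limsup_le_of_le (isCoboundedUnder_le_of_eventually_le atTop hevd) hevc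

theorem statement_5 (f p : ℝ → ℝ) (r ρ : ℝ) (l : ℝ → ℝ)
    (hr : 1 < r) (hl : SlowlyVarying l) (hp : MemP r p)
    (hf : ∀ x > (0:ℝ), f x = x ^ ρ * l x * p x) :
    (∃ c d : ℝ, ∀ lam > (1:ℝ),
        lam ^ d ≤ Filter.liminf (fun x : ℝ => f (lam * x) / f x) Filter.atTop ∧
        Filter.limsup (fun x : ℝ => f (lam * x) / f x) Filter.atTop ≤ lam ^ c) ↔
      ∃ L : NNReal, LipschitzOnWith L p (Set.Icc 1 r) := by
  obtain ⟨hppos, ⟨M, hM⟩, hrc, ⟨c₀, hc₀, hc₀le⟩, hper⟩ := hp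
  have hr0 : (0:ℝ) < r := by linarith
  have hpz := per_zpow hr hper
  have hlow : ∀ x > (0:ℝ), c₀ ≤ p x := by
    intro x hx
    obtain ⟨s, ⟨hs1, hs2⟩, n, rfl⟩ := reduce_to_Ico hr hx
    rw [hpz s (by linarith) n]
    exact hc₀le s ⟨hs1, hs2.le⟩
  have hM0 : (0:ℝ) < M := lt_of_lt_of_le (hppos 1 one_pos) (hM 1 one_pos)
  constructor
  · rintro ⟨c, d, hcd⟩
    exact forward_lip hr hM0 hppos hM (fun lam hlam x hx =>
      forward_key hr hl hppos hM hc₀ hlow hper hf hlam (hcd lam hlam).1 (hcd lam hlam).2 hx)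
  · rintro ⟨Lnn, hLip⟩
    have hL0 : (0:ℝ) ≤ (Lnn : ℝ) := Lnn.coe_nonneg
    have hD : ∀ a ∈ Set.Icc (1:ℝ) r, ∀ b ∈ Set.Icc (1:ℝ) r,
        |p a - p b| ≤ (Lnn : ℝ) * |a - b| := by
      intro a ha b hb
      have h' := hLip.dist_le_mul a ha b hb
      rwa [Real.dist_eq, Real.dist_eq] at h'
    have hstep := reverse_step hr hper hL0 hD
    have hprb := reverse_prb hr hppos hc₀ hlow hper hL0 hstep
    have hC0 : (0:ℝ) ≤ (Lnn : ℝ) * r / c₀ * r :=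
      mul_nonneg (div_nonneg (mul_nonneg hL0 hr0.le) hc₀.le) hr0.le
    exact ⟨|ρ| + (Lnn : ℝ) * r / c₀ * r + 1, -(|ρ| + (Lnn : ℝ) * r / c₀ * r + 1),
      fun lam hlam => reverse_main hl hppos hf hC0 hprb lam hlam⟩
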